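/- Let γ with 1 < γ ≤ 5/3, θ = (γ−1)/2, ρ̄ > 0. If ρ ≥ 0, v real, and z = v − ρ^θ/θ ≤ −ρ̄^θ/θ, then g₁(ρ,v) := ρ^(γ+θ)/(γ(γ−1)) + ρ^γ·v/γ + ρ^(θ+1)·v²/2 − (ρ̄^γ/γ)·(v − ρ^θ) − (ρ̄^(γ−1)/(γ−1))·ρ^(θ+1) ≥ 0, and g₁(ρ,v) = 0 only if ρ = ρ̄ and z = −ρ̄^θ/θ. -/

import Mathlib

open Real Set

set_option maxHeartbeats 2000000

private lemma rpow_nat_mul (x : ℝ) (hx : 0 ≤ x) (θ : ℝ) (n : ℕ) :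
    x ^ ((n : ℝ) * θ) = (x ^ θ) ^ n := by
  rw [mul_comm, Real.rpow_mul hx, Real.rpow_natCast]

private lemma rpow_nat_mul_add_one (x : ℝ) (hx : 0 < x) (θ : ℝ) (n : ℕ) :
    x ^ ((n : ℝ) * θ + 1) = x * (x ^ θ) ^ n := by
  rw [Real.rpow_add hx, Real.rpow_one, rpow_nat_mul x hx.le θ n, mul_comm]

private lemma bern_key (θ ρ ρb : ℝ) (hθ0 : 0 < θ) (hθ1 : θ ≤ 1)
    (hρ : 0 < ρ) (hρb : 0 < ρb) (hle : ρ ≤ ρb) :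
    ρ * (ρb ^ θ - (1 - θ) * ρ ^ θ) ≤ θ * ρ ^ θ * ρb := by
  have hs : 0 < ρ ^ θ := Real.rpow_pos_of_pos hρ θ
  have hd : 0 < ρb / ρ := div_pos hρb hρ
  have ha1 : (1 : ℝ) ≤ (ρb / ρ) ^ θ := by
    calc (1 : ℝ) = 1 ^ θ := (Real.one_rpow θ).symm
    _ ≤ (ρb / ρ) ^ θ := Real.rpow_le_rpow zero_le_one ((one_le_div hρ).2 hle) hθ0.le
  have hber : 1 + (1/θ) * ((ρb/ρ) ^ θ - 1) ≤ (1 + ((ρb/ρ) ^ θ - 1)) ^ (1/θ) :=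
    one_add_mul_self_le_rpow_one_add (by linarith) (by rw [le_div_iff₀ hθ0]; linarith)
  have hid : (1 + ((ρb/ρ) ^ θ - 1)) ^ (1/θ) = ρb / ρ := by
    rw [show 1 + ((ρb/ρ) ^ θ - 1) = (ρb/ρ) ^ θ from by ring,
      ← Real.rpow_mul hd.le, mul_one_div, div_self hθ0.ne', Real.rpow_one]
  rw [hid] at hber
  have h3 : (1 + (1/θ) * ((ρb/ρ) ^ θ - 1)) * ρ ≤ ρb := (le_div_iff₀ hρ).1 hber
  have h4 : (1 + (1/θ) * ((ρb/ρ) ^ θ - 1)) * ρ * θ = θ * ρ + ((ρb/ρ) ^ θ - 1) * ρ := by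
    field_simp
  have h5 : θ * ρ + ((ρb/ρ) ^ θ - 1) * ρ ≤ θ * ρb := by
    have := mul_le_mul_of_nonneg_right h3 hθ0.le
    rw [h4] at this; linarith
  have haa : (ρb/ρ) ^ θ * ρ ^ θ = ρb ^ θ := by
    rw [Real.div_rpow hρb.le hρ.le, div_mul_cancel₀ _ hs.ne']
  have haa2 : (ρb/ρ) ^ θ * ρ ^ θ * ρ = ρb ^ θ * ρ := by rw [haa]
  linarith [mul_le_mul_of_nonneg_left h5 hs.le, haa2]

private lemma hfun_nonneg (θ : ℝ) (hθ0 : 0 < θ) {y : ℝ} (hy : 1 ≤ y) :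
    0 ≤ (θ+1) * y ^ (4*θ+2) - (2*θ+1)^2 * y ^ (2*θ+2) + 4*θ*(θ+1) * y ^ (2*θ+1) - θ
      ∧ (1 < y → 0 < (θ+1) * y ^ (4*θ+2) - (2*θ+1)^2 * y ^ (2*θ+2)
          + 4*θ*(θ+1) * y ^ (2*θ+1) - θ) := by
  set f : ℝ → ℝ := fun x => (θ+1) * x ^ (4*θ+2) - (2*θ+1)^2 * x ^ (2*θ+2)
      + 4*θ*(θ+1) * x ^ (2*θ+1) - θ with hf
  have hcont : ContinuousOn f (Ici 1) := by
    intro x hx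
    have hx0 : x ≠ 0 := by
      have : (1:ℝ) ≤ x := hx
      intro h; rw [h] at this; linarith
    exact ContinuousAt.continuousWithinAt
      ((((continuousAt_const.mul (Real.continuousAt_rpow_const x _ (Or.inl hx0))).sub
        (continuousAt_const.mul (Real.continuousAt_rpow_const x _ (Or.inl hx0)))).add
        (continuousAt_const.mul (Real.continuousAt_rpow_const x _ (Or.inl hx0)))).sub
        continuousAt_const)
  have hmono : StrictMonoOn f (Ici 1) := by
    apply strictMonoOn_of_hasDerivWithinAt_pos (convex_Ici 1) hcont
      (f' := fun x => 2*(θ+1)*(2*θ+1) * (x ^ (2*θ) * (x ^ (2*θ+1) - (2*θ+1)*x + 2*θ)))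
    · intro x hx
      rw [interior_Ici] at hx
      have hx1 : (1:ℝ) < x := hx
      have hx0 : (0:ℝ) < x := by linarith
      have d1 : HasDerivAt (fun z : ℝ => z ^ (4*θ+2)) ((4*θ+2) * x ^ (4*θ+2-1)) x :=
        Real.hasDerivAt_rpow_const (Or.inl hx0.ne')
      have d2 : HasDerivAt (fun z : ℝ => z ^ (2*θ+2)) ((2*θ+2) * x ^ (2*θ+2-1)) x :=
        Real.hasDerivAt_rpow_const (Or.inl hx0.ne')
      have d3 : HasDerivAt (fun z : ℝ => z ^ (2*θ+1)) ((2*θ+1) * x ^ (2*θ+1-1)) x :=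
        Real.hasDerivAt_rpow_const (Or.inl hx0.ne')
      have D : HasDerivAt f ((θ+1) * ((4*θ+2) * x ^ (4*θ+2-1))
          - (2*θ+1)^2 * ((2*θ+2) * x ^ (2*θ+2-1))
          + 4*θ*(θ+1) * ((2*θ+1) * x ^ (2*θ+1-1))) x := by
        have := (((d1.const_mul (θ+1)).sub (d2.const_mul ((2*θ+1)^2))).add
          (d3.const_mul (4*θ*(θ+1)))).sub_const θ
        exact this
      have e1 : x ^ (4*θ+2-1) = x ^ (2*θ) * x ^ (2*θ+1) := by
        rw [← Real.rpow_add hx0]; congr 1; ring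
      have e2 : x ^ (2*θ+2-1) = x ^ (2*θ) * x := by
        rw [show (2*θ+2-1 : ℝ) = 2*θ+1 from by ring, Real.rpow_add hx0, Real.rpow_one]
      have e3 : x ^ (2*θ+1-1) = x ^ (2*θ) := by
        rw [show (2*θ+1-1 : ℝ) = 2*θ from by ring]
      have heq : (θ+1) * ((4*θ+2) * x ^ (4*θ+2-1))
          - (2*θ+1)^2 * ((2*θ+2) * x ^ (2*θ+2-1))
          + 4*θ*(θ+1) * ((2*θ+1) * x ^ (2*θ+1-1))
          = 2*(θ+1)*(2*θ+1) * (x ^ (2*θ) * (x ^ (2*θ+1) - (2*θ+1)*x + 2*θ)) := by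
        rw [e1, e2, e3]; ring
      have D' : HasDerivAt f
          (2*(θ+1)*(2*θ+1) * (x ^ (2*θ) * (x ^ (2*θ+1) - (2*θ+1)*x + 2*θ))) x := heq ▸ D
      exact D'.hasDerivWithinAt
    · intro x hx
      rw [interior_Ici] at hx
      have hx1 : (1:ℝ) < x := hx
      have hx0 : (0:ℝ) < x := by linarith
      have hb : 1 + (2*θ+1) * (x-1) < (1 + (x-1)) ^ (2*θ+1) :=
        one_add_mul_self_lt_rpow_one_add (by linarith)
          (by intro h; exact absurd h (by intro h'; linarith [h'])) (by linarith)
      rw [show 1 + (x-1) = x from by ring] at hb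
      have hp : 0 < x ^ (2*θ) := Real.rpow_pos_of_pos hx0 _
      have hgap : 0 < x ^ (2*θ+1) - (2*θ+1)*x + 2*θ := by linarith [hb]
      exact mul_pos (mul_pos (by linarith : (0:ℝ) < 2*(θ+1)) (by linarith : (0:ℝ) < 2*θ+1))
        (mul_pos hp hgap)
  have hf1 : f 1 = 0 := by
    simp only [hf, Real.one_rpow]; ring
  rcases eq_or_lt_of_le hy with h | h
  · constructor
    · rw [← h]
      simp only [Real.one_rpow]; nlinarith
    · intro hcon; rw [← h] at hcon; exact absurd hcon (by norm_num)
  · have hlt := hmono self_mem_Ici (mem_Ici.2 hy) h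
    rw [hf1] at hlt
    exact ⟨hlt.le, fun _ => hlt⟩

private theorem core_ineq (θ ρ ρb s sb v : ℝ) (hθ0 : 0 < θ) (hθ1 : θ ≤ 1)
    (hρ : 0 < ρ) (hρb : 0 < ρb) (hs : 0 < s) (hsb : 0 < sb)
    (hK1 : ρ ≤ ρb → ρ * (sb - (1-θ)*s) ≤ θ * s * ρb)
    (hles : ρ ≤ ρb → s ≤ sb) (hlts : ρ < ρb → s < sb)
    (heqss : ρ = ρb → s = sb)
    (hBr : ρb ≤ ρ → 0 ≤ ((θ+1)*s^4*ρ^2 - (2*θ+1)^2*s^2*sb^2*ρ^2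
        + 4*θ*(θ+1)*s^2*sb^2*ρ*ρb - θ*sb^4*ρb^2)
      ∧ (ρb < ρ → 0 < ((θ+1)*s^4*ρ^2 - (2*θ+1)^2*s^2*sb^2*ρ^2
        + 4*θ*(θ+1)*s^2*sb^2*ρ*ρb - θ*sb^4*ρb^2)))
    (hz : v - s/θ ≤ -sb/θ) :
    0 ≤ ρ*s^3/((2*θ+1)*(2*θ)) + ρ*s^2*v/(2*θ+1) + ρ*s*v^2/2
        - (ρb*sb^2/(2*θ+1))*(v - s) - (sb^2/(2*θ))*(ρ*s)
    ∧ (ρ*s^3/((2*θ+1)*(2*θ)) + ρ*s^2*v/(2*θ+1) + ρ*s*v^2/2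
        - (ρb*sb^2/(2*θ+1))*(v - s) - (sb^2/(2*θ))*(ρ*s) = 0
      → ρ = ρb ∧ v - s/θ = -sb/θ) := by
  have h2θ : 0 < 2*θ+1 := by linarith
  have hne1 : (2*θ+1 : ℝ) ≠ 0 := h2θ.ne'
  have hθne : θ ≠ 0 := hθ0.ne'
  rw [neg_div] at hz
  set G := ρ*s^3/((2*θ+1)*(2*θ)) + ρ*s^2*v/(2*θ+1) + ρ*s*v^2/2
      - (ρb*sb^2/(2*θ+1))*(v - s) - (sb^2/(2*θ))*(ρ*s) with hGdef
  set w := s/θ - sb/θ - v with hwdef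
  have hw : 0 ≤ w := by rw [hwdef]; linarith
  set D2 := (3*θ+1)*ρ*s^2 - θ*ρb*sb^2 - (2*θ+1)*ρ*s*sb with hD2def
  set E2 := ρ*s*((5*θ+1)*s^2 - 2*(3*θ+1)*s*sb + (2*θ+1)*(1-θ)*sb^2)
      + 2*θ*ρb*sb^2*(sb-(1-θ)*s) with hE2def
  have KEY : 2*θ^2*(2*θ+1) * G = θ^2*(2*θ+1)*ρ*s*w^2 - 2*θ*D2*w + E2 := by
    rw [hGdef, hwdef, hD2def, hE2def]
    field_simp
    ring
  have hA : 0 < θ^2*(2*θ+1)*ρ*s :=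
    mul_pos (mul_pos (mul_pos (pow_pos hθ0 2) h2θ) hρ) hs
  have hc : 0 < 2*θ^2*(2*θ+1) := by linarith [pow_pos hθ0 2, pow_pos hθ0 3]
  have hgoal2 : v - s/θ = -sb/θ ↔ w = 0 := by
    rw [hwdef, neg_div]; constructor <;> intro h <;> linarith
  by_cases hab : ρ ≤ ρb
  · -- case ρ ≤ ρb
    have hssb : s ≤ sb := hles hab
    have hK := hK1 hab
    have hL : θ*sb ≤ sb - (1-θ)*s := by
      linarith [mul_nonneg (by linarith : (0:ℝ) ≤ 1-θ) (by linarith : (0:ℝ) ≤ sb - s)]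
    have hLpos : 0 < sb - (1-θ)*s := lt_of_lt_of_le (mul_pos hθ0 hsb) hL
    -- D2 ≤ 0
    have t1 : ρ*(sb-(1-θ)*s)*sb^2 ≤ θ*s*ρb*sb^2 :=
      mul_le_mul_of_nonneg_right hK (sq_nonneg sb)
    have t2 : 0 ≤ ρ*((sb - s)*((3*θ+1)*s^2 + θ*s*sb + sb^2)) := by
      apply mul_nonneg hρ.le
      apply mul_nonneg (by linarith)
      linarith [mul_pos (mul_pos hθ0 hs) hsb, mul_pos hθ0 (mul_pos hs hs),
        pow_pos hs 2, pow_pos hsb 2]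
    have hD2s : D2 * s ≤ 0 := by rw [hD2def]; linarith [t1, t2]
    have hD2le : D2 ≤ 0 := by
      by_contra hcon
      push_neg at hcon
      linarith [hD2s, mul_pos hcon hs]
    -- E2 ≥ 0, strict if s < sb
    have hQpos : (0:ℝ) < (5*θ+1)*s^2+4*θ*s*sb+2*sb^2 := by
      linarith [mul_pos (mul_pos hθ0 hs) hsb, mul_pos hθ0 (mul_pos hs hs),
        pow_pos hs 2, pow_pos hsb 2]
    have hE2 : 0 ≤ E2 ∧ (s < sb → 0 < E2) := by
      by_cases hBrk : 0 ≤ (5*θ+1)*s^2 - 2*(3*θ+1)*s*sb + (2*θ+1)*(1-θ)*sb^2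
      · have hpos2 : 0 < 2*θ*ρb*sb^2*(sb-(1-θ)*s) :=
          mul_pos (mul_pos (mul_pos (by linarith) hρb) (pow_pos hsb 2)) hLpos
        constructor
        · rw [hE2def]; linarith [mul_nonneg (mul_nonneg hρ.le hs.le) hBrk, hpos2]
        · intro _
          rw [hE2def]; linarith [mul_nonneg (mul_nonneg hρ.le hs.le) hBrk, hpos2]
      · push_neg at hBrk
        have hsBrk : s * ((5*θ+1)*s^2 - 2*(3*θ+1)*s*sb + (2*θ+1)*(1-θ)*sb^2) ≤ 0 :=
          mul_nonpos_of_nonneg_of_nonpos hs.le hBrk.le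
        have m1 : θ*s*ρb * (s * ((5*θ+1)*s^2 - 2*(3*θ+1)*s*sb + (2*θ+1)*(1-θ)*sb^2))
            ≤ ρ*(sb-(1-θ)*s) * (s * ((5*θ+1)*s^2 - 2*(3*θ+1)*s*sb + (2*θ+1)*(1-θ)*sb^2)) :=
          mul_le_mul_of_nonpos_right hK hsBrk
        have hE2L : θ*ρb*((sb-s)^2*((5*θ+1)*s^2+4*θ*s*sb+2*sb^2)) ≤ E2*(sb-(1-θ)*s) := by
          rw [hE2def]; linarith [m1]
        constructor
        · by_contra hcon
          push_neg at hcon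
          linarith [hE2L, mul_pos (neg_pos.2 hcon) hLpos,
            mul_nonneg (mul_nonneg hθ0.le hρb.le)
              (mul_nonneg (sq_nonneg (sb-s)) hQpos.le)]
        · intro hslt
          have hq : 0 < (sb-s)^2 := pow_pos (sub_pos.2 hslt) 2
          have hlhs : 0 < θ*ρb*((sb-s)^2*((5*θ+1)*s^2+4*θ*s*sb+2*sb^2)) :=
            mul_pos (mul_pos hθ0 hρb) (mul_pos hq hQpos)
          by_contra hcon
          push_neg at hcon
          linarith [hE2L, hlhs, mul_nonneg (neg_nonneg.2 hcon) hLpos.le]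
    have a1 : 0 ≤ θ^2*(2*θ+1)*ρ*s*w^2 := mul_nonneg hA.le (sq_nonneg w)
    have a2 : 0 ≤ θ*(-D2)*w := mul_nonneg (mul_nonneg hθ0.le (by linarith)) hw
    have hGnn : 0 ≤ G := by
      by_contra hcon
      push_neg at hcon
      linarith [KEY, a1, a2, hE2.1, mul_pos hc (neg_pos.2 hcon)]
    refine ⟨hGnn, ?_⟩
    intro hG0
    have KEY0 : 0 = θ^2*(2*θ+1)*ρ*s*w^2 - 2*θ*D2*w + E2 := by
      rw [← KEY, hG0]; ring
    have hE20 : E2 = 0 := by linarith [KEY0, a1, a2, hE2.1]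
    have hsseq : s = sb := by
      by_contra hne
      have : s < sb := lt_of_le_of_ne hssb hne
      have := hE2.2 this
      linarith
    have hrr : ρ = ρb := by
      by_contra hne
      have : ρ < ρb := lt_of_le_of_ne hab hne
      exact absurd hsseq (ne_of_lt (hlts this))
    have hw20 : θ^2*(2*θ+1)*ρ*s*w^2 = 0 := by linarith [KEY0, a1, a2, hE2.1]
    have hw0 : w = 0 := by
      by_contra hne
      have h2 : 0 < w^2 := lt_of_le_of_ne (sq_nonneg w) (Ne.symm (pow_ne_zero 2 hne))
      linarith [hw20, mul_pos hA h2]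
    exact ⟨hrr, hgoal2.2 hw0⟩
  · -- case ρb ≤ ρ
    have hba : ρb ≤ ρ := le_of_not_ge hab
    obtain ⟨hBr0, hBrS⟩ := hBr hba
    have I2 : (2*θ+1)*(ρ*s)*E2 - D2^2
        = θ*((θ+1)*s^4*ρ^2 - (2*θ+1)^2*s^2*sb^2*ρ^2
          + 4*θ*(θ+1)*s^2*sb^2*ρ*ρb - θ*sb^4*ρb^2) := by
      rw [hD2def, hE2def]; ring
    have SQ : 4*(θ^2*(2*θ+1)*ρ*s)*(2*θ^2*(2*θ+1)*G)
        = (2*(θ^2*(2*θ+1)*ρ*s)*w - 2*θ*D2)^2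
          + 4*θ^3*((θ+1)*s^4*ρ^2 - (2*θ+1)^2*s^2*sb^2*ρ^2
            + 4*θ*(θ+1)*s^2*sb^2*ρ*ρb - θ*sb^4*ρb^2) := by
      rw [KEY]
      linear_combination 4*θ^2 * I2
    have h4θ3 : (0:ℝ) < 4*θ^3 := by positivity
    have hGnn : 0 ≤ G := by
      by_contra hcon
      push_neg at hcon
      have hneg : 4*(θ^2*(2*θ+1)*ρ*s)*(2*θ^2*(2*θ+1)*G) < 0 :=
        mul_neg_of_pos_of_neg (by linarith) (mul_neg_of_pos_of_neg hc hcon)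
      linarith [SQ, hneg, sq_nonneg (2*(θ^2*(2*θ+1)*ρ*s)*w - 2*θ*D2),
        mul_nonneg h4θ3.le hBr0]
    refine ⟨hGnn, ?_⟩
    intro hG0
    have SQ0 : (0:ℝ) = (2*(θ^2*(2*θ+1)*ρ*s)*w - 2*θ*D2)^2
        + 4*θ^3*((θ+1)*s^4*ρ^2 - (2*θ+1)^2*s^2*sb^2*ρ^2
          + 4*θ*(θ+1)*s^2*sb^2*ρ*ρb - θ*sb^4*ρb^2) := by
      rw [← SQ, hG0]; ring
    have hBr00 : (θ+1)*s^4*ρ^2 - (2*θ+1)^2*s^2*sb^2*ρ^2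
        + 4*θ*(θ+1)*s^2*sb^2*ρ*ρb - θ*sb^4*ρb^2 = 0 := by
      have h1 : 4*θ^3*((θ+1)*s^4*ρ^2 - (2*θ+1)^2*s^2*sb^2*ρ^2
          + 4*θ*(θ+1)*s^2*sb^2*ρ*ρb - θ*sb^4*ρb^2) ≤ 0 := by
        linarith [SQ0, sq_nonneg (2*(θ^2*(2*θ+1)*ρ*s)*w - 2*θ*D2)]
      have hBrle : (θ+1)*s^4*ρ^2 - (2*θ+1)^2*s^2*sb^2*ρ^2
          + 4*θ*(θ+1)*s^2*sb^2*ρ*ρb - θ*sb^4*ρb^2 ≤ 0 := by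
        by_contra hcon
        push_neg at hcon
        linarith [h1, mul_pos h4θ3 hcon]
      linarith
    have hrr : ρ = ρb := by
      by_contra hne
      have hlt' : ρb < ρ := lt_of_le_of_ne hba (Ne.symm hne)
      have := hBrS hlt'
      linarith
    have hss2 : s = sb := heqss hrr
    have hD20 : D2 = 0 := by rw [hD2def, hrr, hss2]; ring
    have hsq0 : (2*(θ^2*(2*θ+1)*ρ*s)*w - 2*θ*D2)^2 = 0 := by
      rw [hBr00] at SQ0; linarith
    have hbase : 2*(θ^2*(2*θ+1)*ρ*s)*w - 2*θ*D2 = 0 := by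
      exact sq_eq_zero_iff.mp hsq0
    rw [hD20] at hbase
    have hw0 : w = 0 := by
      have h2A : (2*(θ^2*(2*θ+1)*ρ*s)) ≠ 0 := (by linarith : (0:ℝ) < 2*(θ^2*(2*θ+1)*ρ*s)).ne'
      have hmul : 2*(θ^2*(2*θ+1)*ρ*s)*w = 0 := by linarith
      rcases mul_eq_zero.mp hmul with h | h
      · exact absurd h h2A
      · exact h
    exact ⟨hrr, hgoal2.2 hw0⟩

theorem stmt_15 (γ θ ρb ρ v : ℝ) (hγ1 : 1 < γ) (hγ2 : γ ≤ 5/3)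
    (hθ : θ = (γ-1)/2) (hρb : 0 < ρb) (hρ : 0 ≤ ρ)
    (hz : v - ρ ^ θ / θ ≤ -(ρb ^ θ) / θ) :
    0 ≤ ρ ^ (γ+θ) / (γ*(γ-1)) + ρ ^ γ * v / γ + ρ ^ (θ+1) * v^2 / 2
      - (ρb ^ γ / γ) * (v - ρ ^ θ) - (ρb ^ (γ-1)/(γ-1)) * ρ ^ (θ+1)
    ∧ (ρ ^ (γ+θ) / (γ*(γ-1)) + ρ ^ γ * v / γ + ρ ^ (θ+1) * v^2 / 2
      - (ρb ^ γ / γ) * (v - ρ ^ θ) - (ρb ^ (γ-1)/(γ-1)) * ρ ^ (θ+1) = 0 →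
      ρ = ρb ∧ v - ρ ^ θ / θ = -(ρb ^ θ) / θ) := by
  have hθ0 : 0 < θ := by rw [hθ]; linarith
  have hθ13 : θ ≤ 1/3 := by rw [hθ]; linarith
  have hθ1 : θ ≤ 1 := by linarith
  have hγ : γ = 2*θ+1 := by rw [hθ]; ring
  have hγ0 : 0 < γ := by linarith
  have hγ10 : 0 < γ - 1 := by linarith
  rcases eq_or_lt_of_le hρ with h0 | hρpos
  · -- ρ = 0
    have h0' : ρ = 0 := h0.symm
    subst h0'
    have z1 : (0:ℝ) ^ (γ+θ) = 0 := Real.zero_rpow (by linarith)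
    have z2 : (0:ℝ) ^ γ = 0 := Real.zero_rpow (by linarith)
    have z3 : (0:ℝ) ^ (θ+1) = 0 := Real.zero_rpow (by linarith)
    have z4 : (0:ℝ) ^ θ = 0 := Real.zero_rpow hθ0.ne'
    rw [z4] at hz
    rw [z1, z2, z3, z4]
    have hsb : 0 < ρb ^ θ := Real.rpow_pos_of_pos hρb θ
    rw [zero_div, sub_zero, neg_div] at hz
    have hv : v < 0 := by
      have h1 : 0 < ρb ^ θ / θ := div_pos hsb hθ0
      linarith
    have hq : 0 < ρb ^ γ / γ := div_pos (Real.rpow_pos_of_pos hρb γ) hγ0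
    have hpos : 0 < ρb ^ γ / γ * (-v) := mul_pos hq (neg_pos.2 hv)
    rw [show (0:ℝ) / (γ*(γ-1)) + 0 * v / γ + 0 * v^2 / 2
      - (ρb ^ γ / γ) * (v - 0) - (ρb ^ (γ-1)/(γ-1)) * 0 = ρb ^ γ / γ * (-v) from by ring]
    constructor
    · exact hpos.le
    · intro h
      exfalso
      linarith
  · -- ρ > 0
    have hs : 0 < ρ ^ θ := Real.rpow_pos_of_pos hρpos θ
    have hsb : 0 < ρb ^ θ := Real.rpow_pos_of_pos hρb θ
    have E1 : ρ ^ (γ+θ) = ρ * (ρ^θ)^3 := by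
      rw [show γ + θ = ((3:ℕ):ℝ)*θ + 1 from by rw [hγ]; push_cast; ring,
        rpow_nat_mul_add_one ρ hρpos θ 3]
    have E2 : ρ ^ γ = ρ * (ρ^θ)^2 := by
      rw [show γ = ((2:ℕ):ℝ)*θ + 1 from by rw [hγ]; push_cast; ring,
        rpow_nat_mul_add_one ρ hρpos θ 2]
    have E3 : ρ ^ (θ+1) = ρ * (ρ^θ)^1 := by
      rw [show θ + 1 = ((1:ℕ):ℝ)*θ + 1 from by push_cast; ring,
        rpow_nat_mul_add_one ρ hρpos θ 1]
    have E4 : ρb ^ γ = ρb * (ρb^θ)^2 := by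
      rw [show γ = ((2:ℕ):ℝ)*θ + 1 from by rw [hγ]; push_cast; ring,
        rpow_nat_mul_add_one ρb hρb θ 2]
    have E5 : ρb ^ (γ-1) = (ρb^θ)^2 := by
      rw [show γ - 1 = ((2:ℕ):ℝ)*θ from by rw [hγ]; push_cast; ring,
        rpow_nat_mul ρb hρb.le θ 2]
    have hne1 : (2*θ+1 : ℝ) ≠ 0 := by linarith
    have hne2 : (θ : ℝ) ≠ 0 := hθ0.ne'
    have hEQ : ρ ^ (γ+θ) / (γ*(γ-1)) + ρ ^ γ * v / γ + ρ ^ (θ+1) * v^2 / 2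
        - (ρb ^ γ / γ) * (v - ρ ^ θ) - (ρb ^ (γ-1)/(γ-1)) * ρ ^ (θ+1)
        = ρ*(ρ^θ)^3/((2*θ+1)*(2*θ)) + ρ*(ρ^θ)^2*v/(2*θ+1) + ρ*(ρ^θ)*v^2/2
          - (ρb*(ρb^θ)^2/(2*θ+1))*(v - ρ^θ) - ((ρb^θ)^2/(2*θ))*(ρ*(ρ^θ)) := by
      rw [E1, E2, E3, E4, E5, hγ]
      field_simp
      ring
    rw [hEQ]
    apply core_ineq θ ρ ρb (ρ^θ) (ρb^θ) v hθ0 hθ1 hρpos hρb hs hsb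
    · intro hab
      exact bern_key θ ρ ρb hθ0 hθ1 hρpos hρb hab
    · intro hab
      exact Real.rpow_le_rpow hρpos.le hab hθ0.le
    · intro hab
      exact Real.rpow_lt_rpow hρpos.le hab hθ0
    · intro hab
      rw [hab]
    · -- hBr
      intro hba
      have hy : 1 ≤ ρ/ρb := (one_le_div hρb).2 hba
      obtain ⟨hf0, hf1⟩ := hfun_nonneg θ hθ0 hy
      have hyn : 0 ≤ ρ/ρb := by positivity
      have c1 : (ρ/ρb)^(4*θ+2) * ρb^(4*θ+2) = (ρ^θ)^4*ρ^2 := by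
        rw [← Real.mul_rpow hyn hρb.le, div_mul_cancel₀ _ hρb.ne',
          show (4*θ+2 : ℝ) = ((4:ℕ):ℝ)*θ + ((2:ℕ):ℝ) from by push_cast; ring,
          Real.rpow_add hρpos, rpow_nat_mul ρ hρpos.le θ 4, Real.rpow_natCast]
      have c4 : ρb^(4*θ+2) = (ρb^θ)^4*ρb^2 := by
        rw [show (4*θ+2 : ℝ) = ((4:ℕ):ℝ)*θ + ((2:ℕ):ℝ) from by push_cast; ring,
          Real.rpow_add hρb, rpow_nat_mul ρb hρb.le θ 4, Real.rpow_natCast]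
      have c2 : (ρ/ρb)^(2*θ+2) * ρb^(4*θ+2) = (ρ^θ)^2*(ρb^θ)^2*ρ^2 := by
        rw [show (4*θ+2 : ℝ) = (2*θ+2) + 2*θ from by ring, Real.rpow_add hρb, ← mul_assoc,
          ← Real.mul_rpow hyn hρb.le, div_mul_cancel₀ _ hρb.ne',
          show (2*θ+2 : ℝ) = ((2:ℕ):ℝ)*θ + ((2:ℕ):ℝ) from by push_cast; ring,
          Real.rpow_add hρpos, rpow_nat_mul ρ hρpos.le θ 2, Real.rpow_natCast,
          show (2*θ : ℝ) = ((2:ℕ):ℝ)*θ from by push_cast; ring,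
          rpow_nat_mul ρb hρb.le θ 2]
        ring
      have c3 : (ρ/ρb)^(2*θ+1) * ρb^(4*θ+2) = (ρ^θ)^2*(ρb^θ)^2*ρ*ρb := by
        rw [show (4*θ+2 : ℝ) = (2*θ+1) + (2*θ+1) from by ring, Real.rpow_add hρb, ← mul_assoc,
          ← Real.mul_rpow hyn hρb.le, div_mul_cancel₀ _ hρb.ne',
          show (2*θ+1 : ℝ) = ((2:ℕ):ℝ)*θ + 1 from by push_cast; ring,
          rpow_nat_mul_add_one ρ hρpos θ 2, rpow_nat_mul_add_one ρb hρb θ 2]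
        ring
      have hcomb : (θ+1)*(ρ^θ)^4*ρ^2 - (2*θ+1)^2*(ρ^θ)^2*(ρb^θ)^2*ρ^2
          + 4*θ*(θ+1)*(ρ^θ)^2*(ρb^θ)^2*ρ*ρb - θ*(ρb^θ)^4*ρb^2
          = ρb^(4*θ+2) * ((θ+1) * (ρ/ρb) ^ (4*θ+2) - (2*θ+1)^2 * (ρ/ρb) ^ (2*θ+2)
            + 4*θ*(θ+1) * (ρ/ρb) ^ (2*θ+1) - θ) := by
        linear_combination (-(θ+1))*c1 + (2*θ+1)^2*c2 + (-(4*θ*(θ+1)))*c3 + θ*c4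
      constructor
      · rw [hcomb]
        exact mul_nonneg (Real.rpow_nonneg hρb.le _) hf0
      · intro hlt
        rw [hcomb]
        exact mul_pos (Real.rpow_pos_of_pos hρb _) (hf1 ((one_lt_div hρb).2 hlt))
    · exact hz
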